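/- Let f : ℝ → ℝ be a probability density function (f ≥ 0, measurable, ∫_ℝ f = 1) with f(x) ≤ M for all x ∈ ℝ, and let r > 0 and Δ > 0. Then ∫_{−∞}^{+∞} Φ(−|ε|/r)² f(ε) dε ≤ Φ(−Δ)² + 2 M r Δ, where Φ is the standard normal cumulative distribution function. -/

import Mathlib

open MeasureTheory Real

/-- The standard normal cumulative distribution function
`Φ(x) = ∫_{-∞}^x (1/√(2π)) e^{-s²/2} ds`. -/
noncomputable def stdNormalCDF (x : ℝ) : ℝ :=
  ∫ s in Set.Iic x, (Real.sqrt (2 * Real.pi))⁻¹ * Real.exp (-s ^ 2 / 2)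

private lemma gauss_nonneg (s : ℝ) :
    0 ≤ (Real.sqrt (2 * Real.pi))⁻¹ * Real.exp (-s ^ 2 / 2) :=
  mul_nonneg (inv_nonneg.2 (Real.sqrt_nonneg _)) (Real.exp_pos _).le

private lemma gauss_integrable :
    Integrable (fun s : ℝ => (Real.sqrt (2 * Real.pi))⁻¹ * Real.exp (-s ^ 2 / 2)) := by
  apply Integrable.const_mul
  have h : ∀ s : ℝ, -s ^ 2 / 2 = -(2⁻¹ : ℝ) * s ^ 2 := by intro s; ring
  simp_rw [h]
  exact integrable_exp_neg_mul_sq (by norm_num)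

private lemma gauss_total :
    ∫ s : ℝ, (Real.sqrt (2 * Real.pi))⁻¹ * Real.exp (-s ^ 2 / 2) = 1 := by
  have h : ∀ s : ℝ, -s ^ 2 / 2 = -(2⁻¹ : ℝ) * s ^ 2 := by intro s; ring
  simp_rw [h]
  rw [integral_const_mul, integral_gaussian]
  have : Real.pi / 2⁻¹ = 2 * Real.pi := by ring
  rw [this, inv_mul_cancel₀]
  positivity

private lemma stdNormalCDF_nonneg (x : ℝ) : 0 ≤ stdNormalCDF x :=
  integral_nonneg fun s => gauss_nonneg s

private lemma stdNormalCDF_mono : Monotone stdNormalCDF := by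
  intro x y hxy
  exact setIntegral_mono_set gauss_integrable.integrableOn
    (Filter.Eventually.of_forall gauss_nonneg)
    (HasSubset.Subset.eventuallyLE (Set.Iic_subset_Iic.2 hxy))

private lemma stdNormalCDF_le_one (x : ℝ) : stdNormalCDF x ≤ 1 := by
  rw [← gauss_total]
  exact setIntegral_le_integral gauss_integrable
    (Filter.Eventually.of_forall gauss_nonneg)

private lemma stdNormalCDF_measurable : Measurable stdNormalCDF :=
  stdNormalCDF_mono.measurable

/-- If `f` is a measurable probability density bounded by `M`, and `r > 0`,
`Δ > 0`, then `∫ Φ(-|ε|/r)² f(ε) dε ≤ Φ(-Δ)² + 2 M r Δ`. -/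
theorem integral_sq_smoothed_score_diff_le {f : ℝ → ℝ} {M r Δ : ℝ}
    (hf_nonneg : ∀ x, 0 ≤ f x) (hf_meas : Measurable f)
    (hf_int : ∫ x : ℝ, f x = 1) (hf_bound : ∀ x, f x ≤ M)
    (hr : 0 < r) (hΔ : 0 < Δ) :
    ∫ ε : ℝ, stdNormalCDF (-|ε| / r) ^ 2 * f ε ≤
      stdNormalCDF (-Δ) ^ 2 + 2 * M * r * Δ := by
  set h : ℝ → ℝ := fun ε => stdNormalCDF (-|ε| / r) ^ 2 * f ε with hh
  have hM : 0 ≤ M := le_trans (hf_nonneg 0) (hf_bound 0)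
  -- f is integrable
  have hfint : Integrable f := by
    by_contra hc
    rw [integral_undef hc] at hf_int
    norm_num at hf_int
  -- measurability of h
  have hmeas : Measurable h := by
    apply Measurable.mul _ hf_meas
    exact ((stdNormalCDF_measurable.comp ((measurable_abs.neg).div_const r)).pow_const 2)
  -- pointwise facts
  have hΦsq : ∀ x : ℝ, stdNormalCDF x ^ 2 ≤ 1 := fun x => by
    have h1 := stdNormalCDF_nonneg x
    have h2 := stdNormalCDF_le_one x
    nlinarith
  have hh_nonneg : ∀ ε, 0 ≤ h ε := fun ε =>
    mul_nonneg (sq_nonneg _) (hf_nonneg ε)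
  have hh_le_f : ∀ ε, h ε ≤ f ε := fun ε => by
    simp only [hh]
    have := hΦsq (-|ε| / r)
    nlinarith [hf_nonneg ε, sq_nonneg (stdNormalCDF (-|ε| / r))]
  have hhint : Integrable h :=
    hfint.mono' hmeas.aestronglyMeasurable
      (Filter.Eventually.of_forall fun ε => by
        rw [Real.norm_eq_abs, abs_of_nonneg (hh_nonneg ε)]; exact hh_le_f ε)
  -- split
  set A : Set ℝ := Set.Icc (-(r * Δ)) (r * Δ) with hA
  have hAmeas : MeasurableSet A := measurableSet_Icc
  have hsplit : ∫ ε, h ε = (∫ ε in A, h ε) + ∫ ε in Aᶜ, h ε := by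
    rw [← integral_add_compl hAmeas hhint]
  -- bound on A
  have hvolA : (volume A).toReal = 2 * r * Δ := by
    rw [hA, Real.volume_Icc]
    rw [ENNReal.toReal_ofReal (by nlinarith)]
    ring
  have hboundA : ∫ ε in A, h ε ≤ 2 * M * r * Δ := by
    have : ∫ ε in A, h ε ≤ ∫ _ε in A, M := by
      apply setIntegral_mono_on hhint.integrableOn (integrableOn_const ?_) hAmeas
      · intro ε _
        exact le_trans (hh_le_f ε) (hf_bound ε)
      · rw [hA, Real.volume_Icc]; exact ENNReal.ofReal_ne_top
    rw [setIntegral_const, smul_eq_mul, measureReal_def, hvolA] at this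
    linarith [this]
  -- bound on Aᶜ
  have hboundAc : ∫ ε in Aᶜ, h ε ≤ stdNormalCDF (-Δ) ^ 2 := by
    have step1 : ∫ ε in Aᶜ, h ε ≤ ∫ ε in Aᶜ, stdNormalCDF (-Δ) ^ 2 * f ε := by
      apply setIntegral_mono_on hhint.integrableOn
        ((hfint.const_mul _).integrableOn) hAmeas.compl
      intro ε hε
      have hεA : r * Δ < |ε| := by
        rw [hA] at hε
        simp only [Set.mem_compl_iff, Set.mem_Icc, not_and_or, not_le] at hε
        rcases hε with hε | hε
        · calc r * Δ < -ε := by linarith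
            _ ≤ |ε| := neg_le_abs ε
        · exact lt_of_lt_of_le hε (le_abs_self ε)
      have harg : -|ε| / r ≤ -Δ := by
        rw [div_le_iff₀ hr]
        nlinarith
      have hmono := stdNormalCDF_mono harg
      have h0 := stdNormalCDF_nonneg (-|ε| / r)
      simp only [hh]
      exact mul_le_mul_of_nonneg_right (pow_le_pow_left₀ h0 hmono 2) (hf_nonneg ε)
    have step2 : ∫ ε in Aᶜ, stdNormalCDF (-Δ) ^ 2 * f ε
        = stdNormalCDF (-Δ) ^ 2 * ∫ ε in Aᶜ, f ε := by
      rw [integral_const_mul]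
    have step3 : ∫ ε in Aᶜ, f ε ≤ 1 := by
      rw [← hf_int]
      exact setIntegral_le_integral hfint (Filter.Eventually.of_forall hf_nonneg)
    calc ∫ ε in Aᶜ, h ε ≤ stdNormalCDF (-Δ) ^ 2 * ∫ ε in Aᶜ, f ε := by
          rw [← step2]; exact step1
      _ ≤ stdNormalCDF (-Δ) ^ 2 * 1 := by
          apply mul_le_mul_of_nonneg_left step3 (sq_nonneg _)
      _ = stdNormalCDF (-Δ) ^ 2 := mul_one _
  calc ∫ ε : ℝ, h ε = (∫ ε in A, h ε) + ∫ ε in Aᶜ, h ε := hsplit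
    _ ≤ 2 * M * r * Δ + stdNormalCDF (-Δ) ^ 2 := add_le_add hboundA hboundAc
    _ = stdNormalCDF (-Δ) ^ 2 + 2 * M * r * Δ := by ring
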